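/- Let U, V ∈ ℝ^{n×n} be symmetric positive semidefinite matrices. Then I + U V is nonsingular, and both V (I + U V)^{-1} and (I + U V)^{-1} U are symmetric positive semidefinite. -/

import Mathlib

open Matrix

theorem stmt_17 (n : ℕ)
    (U V : Matrix (Fin n) (Fin n) ℝ)
    (hU : U.PosSemidef) (hV : V.PosSemidef) :
    IsUnit (1 + U * V) ∧ (V * (1 + U * V)⁻¹).PosSemidef ∧
      ((1 + U * V)⁻¹ * U).PosSemidef := by
  set S := (open scoped MatrixOrder in CFC.sqrt U) with hS
  have hSpsd : S.PosSemidef := by open scoped MatrixOrder in exact (CFC.sqrt_nonneg U).posSemidef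
  have hSS : S * S = U := by open scoped MatrixOrder in exact CFC.sqrt_mul_sqrt_self U hU.nonneg
  have hdet : (1 + U * V).det = (1 + S * V * S).det := by
    rw [← hSS, mul_assoc, det_one_add_mul_comm, mul_assoc]
  have hSVS : (S * V * S).PosSemidef := by
    have := hV.conjTranspose_mul_mul_same S
    rwa [hSpsd.isHermitian.eq] at this
  have hpd : (1 + S * V * S).PosDef := Matrix.PosDef.add_posSemidef Matrix.PosDef.one hSVS
  have hu : IsUnit (1 + U * V) := by
    rw [Matrix.isUnit_iff_isUnit_det, hdet]
    exact hpd.det_pos.ne'.isUnit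
  have hudet : IsUnit (1 + U * V).det := (Matrix.isUnit_iff_isUnit_det _).1 hu
  -- transpose facts
  have hUt : Uᴴ = U := hU.isHermitian.eq
  have hVt : Vᴴ = V := hV.isHermitian.eq
  have htrans : (1 + U * V)ᴴ = 1 + V * U := by
    rw [conjTranspose_add, conjTranspose_one, conjTranspose_mul, hUt, hVt]
  have hudet' : IsUnit (1 + V * U).det := by
    rw [← htrans, Matrix.det_conjTranspose]
    simpa using hudet
  have hinvT : ((1 + U * V)⁻¹)ᴴ = (1 + V * U)⁻¹ := by
    rw [← htrans, Matrix.conjTranspose_nonsing_inv]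
  -- key identity for V * (1+UV)⁻¹
  have key1 : V * (1 + U * V)⁻¹ =
      ((1 + U * V)⁻¹)ᴴ * (V + V * U * V) * (1 + U * V)⁻¹ := by
    rw [hinvT]
    have : (V + V * U * V) = (1 + V * U) * V := by noncomm_ring
    rw [this, ← mul_assoc, Matrix.nonsing_inv_mul _ hudet', one_mul]
  have hVUV : (V + V * U * V).PosSemidef := by
    refine hV.add ?_
    have := hU.conjTranspose_mul_mul_same V
    rwa [hVt] at this
  have h2 : (V * (1 + U * V)⁻¹).PosSemidef := by
    rw [key1]
    exact hVUV.conjTranspose_mul_mul_same _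
  -- key identity for (1+UV)⁻¹ * U
  have key2 : (1 + U * V)⁻¹ * U =
      (1 + U * V)⁻¹ * (U + U * V * U) * ((1 + U * V)⁻¹)ᴴ := by
    rw [hinvT]
    have : (U + U * V * U) = U * (1 + V * U) := by noncomm_ring
    rw [this, mul_assoc ((1 + U * V)⁻¹), mul_assoc U, Matrix.mul_nonsing_inv _ hudet', mul_one]
  have hUVU : (U + U * V * U).PosSemidef := by
    refine hU.add ?_
    have := hV.conjTranspose_mul_mul_same U
    rwa [hUt] at this
  have h3 : ((1 + U * V)⁻¹ * U).PosSemidef := by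
    rw [key2]
    exact hUVU.mul_mul_conjTranspose_same _
  exact ⟨hu, h2, h3⟩
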